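/- arXiv:1407.7521 — 3 statements merged into one kernel-verified Lean document; each statement's English description precedes it below -/
import Mathlib

section
/- Let p be a prime, n an arbitrary integer (possibly negative), and k a nonnegative integer. Then the p-adic valuation of the binomial coefficient C(n, k) equals the number of carries when adding k and n - k in base p (interpreted via the p-adic digit expansions; infinitely many carries corresponds to the binomial coefficient being zero). -/
/-- A carry occurs out of position `i` (into position `i + 1`) when adding the
integers `a` and `b` (given via their `p`-adic digit expansions) in base `p`,
if and only if the sum of their residues modulo `p^(i+1)` is at least `p^(i+1)`. -/
def carryAt (p : ℕ) (a b : ℤ) (i : ℕ) : Prop :=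
  (p : ℤ) ^ (i + 1) ≤ a % (p : ℤ) ^ (i + 1) + b % (p : ℤ) ^ (i + 1)

open Nat Polynomial

private lemma choose_neg_int (m k : ℕ) :
    Ring.choose (-(m : ℤ) - 1) k = (-1) ^ k * (((m + k).choose k : ℕ) : ℤ) := by
  have hfac : (k.factorial : ℤ) ≠ 0 := by exact_mod_cast k.factorial_ne_zero
  have h := Ring.descPochhammer_eq_factorial_smul_choose (R := ℤ) (-(m : ℤ) - 1) k
  have h2 := ascPochhammer_eval_neg_eq_descPochhammer (R := ℤ) (-(m : ℤ) - 1) k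
  have h3 : (ascPochhammer ℤ k).eval (-(-(m : ℤ) - 1)) =
      ((k.factorial * (m + k).choose k : ℕ) : ℤ) := by
    rw [show (-(-(m : ℤ) - 1)) = (((m + 1 : ℕ) : ℤ)) by push_cast; ring,
      ← ascPochhammer_eval_cast, ascPochhammer_nat_eq_ascFactorial,
      ascFactorial_eq_factorial_mul_choose]
  have h4 : (descPochhammer ℤ k).eval (-(m : ℤ) - 1) =
      (-1) ^ k * ((k.factorial * (m + k).choose k : ℕ) : ℤ) := by
    have hsq : ((-1 : ℤ) ^ k) * ((-1 : ℤ) ^ k) = 1 := by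
      rw [← pow_add]; exact Even.neg_one_pow ⟨k, rfl⟩
    rw [← h3, h2, ← mul_assoc, hsq, one_mul]
  apply mul_left_cancel₀ hfac
  rw [← nsmul_eq_mul, ← h, ← Polynomial.eval_eq_smeval, h4]
  push_cast
  ring

private lemma carryAt_natCast (p a b i : ℕ) :
    carryAt p a b i ↔ p ^ (i + 1) ≤ a % p ^ (i + 1) + b % p ^ (i + 1) := by
  unfold carryAt
  rw [show ((p : ℤ)) ^ (i + 1) = ((p ^ (i + 1) : ℕ) : ℤ) by push_cast; ring,
    ← Int.natCast_mod, ← Int.natCast_mod, ← Nat.cast_add, Nat.cast_le]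

private lemma negmod (x : ℕ) (q : ℤ) (hq : 0 < q) :
    (-(x : ℤ) - 1) % q = q - 1 - (x : ℤ) % q := by
  have h2 : 0 ≤ (x : ℤ) % q := Int.emod_nonneg _ hq.ne'
  have h3 : (x : ℤ) % q < q := Int.emod_lt_of_pos _ hq
  have h1 : -(x : ℤ) - 1 = (q - 1 - (x : ℤ) % q) + q * (-((x : ℤ) / q) - 1) := by
    have := Int.emod_add_mul_ediv (x : ℤ) q
    ring_nf
    linarith
  rw [h1, Int.add_mul_emod_self_left, Int.emod_eq_of_lt (by omega) (by omega)]

private lemma nat_carry_iff (Q k m : ℕ) (hQ : 0 < Q) :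
    (m + k) % Q < k % Q ↔ Q ≤ k % Q + m % Q := by
  have h1 : k % Q < Q := Nat.mod_lt _ hQ
  have h2 : m % Q < Q := Nat.mod_lt _ hQ
  rw [Nat.add_mod]
  rcases le_or_gt Q (m % Q + k % Q) with h | h
  · rw [Nat.mod_eq_sub_mod h, Nat.mod_eq_of_lt (by omega)]; omega
  · rw [Nat.mod_eq_of_lt h]; omega

private lemma carryAt_neg (p k m i : ℕ) (hp : 0 < p) :
    carryAt p (k : ℤ) (-(((m + k : ℕ)) : ℤ) - 1) i ↔
      p ^ (i + 1) ≤ k % p ^ (i + 1) + m % p ^ (i + 1) := by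
  have hq : (0 : ℤ) < (p : ℤ) ^ (i + 1) := by positivity
  have hQ : 0 < p ^ (i + 1) := pow_pos hp _
  unfold carryAt
  rw [negmod (m + k) _ hq,
    show ((p : ℤ)) ^ (i + 1) = ((p ^ (i + 1) : ℕ) : ℤ) by push_cast; ring,
    ← Int.natCast_mod, ← Int.natCast_mod, ← nat_carry_iff _ _ _ hQ]
  omega

private lemma carry_set_finite (p : ℕ) (hp : p.Prime) (k m : ℕ) :
    {i : ℕ | p ^ (i + 1) ≤ k % p ^ (i + 1) + m % p ^ (i + 1)}.Finite := by
  apply Set.Finite.subset (Set.finite_Iio (Nat.log p (m + k) + 1))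
  intro i hi
  simp only [Set.mem_setOf_eq] at hi
  have h1 : p ^ (i + 1) ≤ m + k :=
    le_trans hi (by have := Nat.mod_le k (p ^ (i+1)); have := Nat.mod_le m (p ^ (i+1)); omega)
  have hmk : m + k ≠ 0 := by
    have : 0 < p ^ (i + 1) := pow_pos hp.pos _
    omega
  have := (Nat.le_log_iff_pow_le hp.one_lt hmk).mpr h1
  simp only [Set.mem_Iio]
  omega

private lemma carry_set_card (p : ℕ) (hp : p.Prime) (k m : ℕ) :
    padicValNat p ((m + k).choose k) =
      {i : ℕ | p ^ (i + 1) ≤ k % p ^ (i + 1) + m % p ^ (i + 1)}.ncard := by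
  haveI := Fact.mk hp
  set b := Nat.log p (m + k) + 1 with hb
  rw [padicValNat_choose' (p := p) (n := m) (k := k) (b := b) (by omega)]
  have hfin := carry_set_finite p hp k m
  rw [Set.ncard_eq_toFinset_card _ hfin]
  refine Finset.card_bij (fun j _ => j - 1) ?_ ?_ ?_
  · intro j hj
    simp only [Finset.mem_filter, Finset.mem_Ico] at hj
    rw [Set.Finite.mem_toFinset]
    simp only [Set.mem_setOf_eq]
    rw [show j - 1 + 1 = j by omega]
    exact hj.2
  · intro a ha b' hb' hab
    simp only [Finset.mem_filter, Finset.mem_Ico] at ha hb'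
    have hab' : a - 1 = b' - 1 := hab
    omega
  · intro i hi
    rw [Set.Finite.mem_toFinset] at hi
    simp only [Set.mem_setOf_eq] at hi
    refine ⟨i + 1, ?_, by simp⟩
    simp only [Finset.mem_filter, Finset.mem_Ico]
    refine ⟨⟨by omega, ?_⟩, hi⟩
    have h1 : p ^ (i + 1) ≤ m + k :=
      le_trans hi (by have := Nat.mod_le k (p ^ (i+1)); have := Nat.mod_le m (p ^ (i+1)); omega)
    have hmk : m + k ≠ 0 := by
      have : 0 < p ^ (i + 1) := pow_pos hp.pos _
      omega
    have := (Nat.le_log_iff_pow_le hp.one_lt hmk).mpr h1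
    omega

/-- **Kummer's theorem for generalized binomial coefficients.**  For a prime `p`,
an arbitrary integer `n` and a natural number `k`, the `p`-adic valuation of the
binomial coefficient `C(n, k)` equals the number of carries when adding `k` and
`n - k` in base `p`; infinitely many carries corresponds to `C(n, k) = 0`. -/
theorem kummer_int_binomial (p : ℕ) (hp : p.Prime) (n : ℤ) (k : ℕ) :
    (Ring.choose n k = 0 ↔ {i : ℕ | carryAt p (k : ℤ) (n - (k : ℤ)) i}.Infinite) ∧
    ∀ hfin : {i : ℕ | carryAt p (k : ℤ) (n - (k : ℤ)) i}.Finite,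
      padicValInt p (Ring.choose n k) = hfin.toFinset.card := by
  rcases lt_or_ge n 0 with hn | hn
  · -- n < 0
    set m : ℕ := (-n - 1).toNat with hm
    have hn' : n = -(m : ℤ) - 1 := by omega
    have hbb : n - (k : ℤ) = -(((m + k : ℕ)) : ℤ) - 1 := by push_cast; omega
    have hset : {i : ℕ | carryAt p (k : ℤ) (n - (k : ℤ)) i} =
        {i : ℕ | p ^ (i + 1) ≤ k % p ^ (i + 1) + m % p ^ (i + 1)} := by
      ext i
      simp only [Set.mem_setOf_eq, hbb]
      exact carryAt_neg p k m i hp.pos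
    have hchoose : Ring.choose n k = (-1) ^ k * (((m + k).choose k : ℕ) : ℤ) := by
      rw [hn']; exact choose_neg_int m k
    have hcpos : 0 < (m + k).choose k := Nat.choose_pos (Nat.le_add_left k m)
    have hne : Ring.choose n k ≠ 0 := by
      rw [hchoose]
      intro h
      rcases mul_eq_zero.mp h with h | h
      · exact (by positivity : ((-1 : ℤ) ^ k) ^ 2 ≠ 0) (by rw [sq, h, mul_zero])
      · exact_mod_cast absurd h (by exact_mod_cast hcpos.ne')
    have hfin' : {i : ℕ | carryAt p (k : ℤ) (n - (k : ℤ)) i}.Finite := by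
      rw [hset]; exact carry_set_finite p hp k m
    constructor
    · exact ⟨fun h => absurd h hne, fun h => absurd h (Set.not_infinite.mpr hfin')⟩
    · intro hfin
      have hval : padicValInt p (Ring.choose n k) = padicValNat p ((m + k).choose k) := by
        unfold padicValInt
        rw [hchoose]
        congr 1
        rw [Int.natAbs_mul, Int.natAbs_pow]
        simp
      rw [hval, carry_set_card p hp k m, ← hset, Set.ncard_eq_toFinset_card _ hfin]
  · rcases le_or_gt (k : ℤ) n with hkn | hnk
    · -- 0 ≤ k ≤ n
      set m : ℕ := n.toNat - k with hm
      have hn' : n = ((m + k : ℕ) : ℤ) := by push_cast; omega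
      have hbb : n - (k : ℤ) = ((m : ℕ) : ℤ) := by omega
      have hset : {i : ℕ | carryAt p (k : ℤ) (n - (k : ℤ)) i} =
          {i : ℕ | p ^ (i + 1) ≤ k % p ^ (i + 1) + m % p ^ (i + 1)} := by
        ext i
        simp only [Set.mem_setOf_eq, hbb]
        exact carryAt_natCast p k m i
      have hchoose : Ring.choose n k = (((m + k).choose k : ℕ) : ℤ) := by
        rw [hn', Ring.choose_natCast]
      have hcpos : 0 < (m + k).choose k := Nat.choose_pos (Nat.le_add_left k m)
      have hne : Ring.choose n k ≠ 0 := by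
        rw [hchoose]; exact_mod_cast hcpos.ne'
      have hfin' : {i : ℕ | carryAt p (k : ℤ) (n - (k : ℤ)) i}.Finite := by
        rw [hset]; exact carry_set_finite p hp k m
      constructor
      · exact ⟨fun h => absurd h hne, fun h => absurd h (Set.not_infinite.mpr hfin')⟩
      · intro hfin
        have hval : padicValInt p (Ring.choose n k) = padicValNat p ((m + k).choose k) := by
          unfold padicValInt
          rw [hchoose]
          congr 1
        rw [hval, carry_set_card p hp k m, ← hset, Set.ncard_eq_toFinset_card _ hfin]
    · -- 0 ≤ n < k
      have hzero : Ring.choose n k = 0 := by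
        rw [show n = ((n.toNat : ℕ) : ℤ) by omega, Ring.choose_natCast,
          Nat.choose_eq_zero_of_lt (by omega)]
        exact Nat.cast_zero
      have hinf : {i : ℕ | carryAt p (k : ℤ) (n - (k : ℤ)) i}.Infinite := by
        apply Set.infinite_of_injective_forall_mem (f := fun j : ℕ => j + k)
        · intro a b' hab
          have hab' : a + k = b' + k := hab
          omega
        · intro j
          simp only [Set.mem_setOf_eq]
          unfold carryAt
          set q : ℤ := (p : ℤ) ^ (j + k + 1) with hq
          have hkq : (k : ℤ) < q := by
            have h1 : k < 2 ^ (j + k + 1) := lt_of_lt_of_le (Nat.lt_two_pow_self (n := k))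
              (Nat.pow_le_pow_right (by norm_num) (by omega))
            have h2 : (2 : ℕ) ^ (j + k + 1) ≤ p ^ (j + k + 1) :=
              Nat.pow_le_pow_left hp.two_le _
            have : (k : ℕ) < p ^ (j + k + 1) := lt_of_lt_of_le h1 h2
            rw [hq]; exact_mod_cast this
          have hqpos : (0 : ℤ) < q := by
            rw [hq]
            exact pow_pos (by exact_mod_cast hp.pos) _
          have hkmod : (k : ℤ) % q = (k : ℤ) :=
            Int.emod_eq_of_lt (Int.natCast_nonneg k) hkq
          have hbmod : (n - (k : ℤ)) % q = n - (k : ℤ) + q := by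
            have h5 : (n - (k : ℤ)) % q = (n - (k : ℤ) + q) % q := by
              conv_lhs => rw [show n - (k : ℤ) = (n - (k : ℤ) + q) + q * (-1) by ring]
              rw [Int.add_mul_emod_self_left]
            rw [h5, Int.emod_eq_of_lt (by omega) (by omega)]
          rw [hkmod, hbmod]
          omega
      constructor
      · exact ⟨fun _ => hinf, fun _ => hzero⟩
      · intro hfin
        exact absurd hinf (Set.not_infinite.mpr hfin)
end

section
/- Let p be a prime, a an integer, and i ∈ {0,1,...,p-1}. If j is an integer with 0 < j < p - i, then for all positive integers m and λ, the binomial coefficient C(p·a + i, p^λ·m - j) is congruent to 0 modulo p^λ. -/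
open Finset

/-- Key natural-number lemma via Kummer's theorem: if adding `k` and `s` in base `p`
produces a carry at each of the positions `1, ..., lam`, then `p ^ lam ∣ C(s+k, k)`. -/
lemma key_nat_dvd_choose (p : ℕ) (hp : p.Prime) (s k lam : ℕ)
    (h : ∀ t, 1 ≤ t → t ≤ lam → p ^ t ≤ k % p ^ t + s % p ^ t) :
    p ^ lam ∣ Nat.choose (s + k) k := by
  set b := max (Nat.log p (s + k) + 1) (lam + 1) with hb
  have hlog : Nat.log p (s + k) < b := lt_of_lt_of_le (Nat.lt_succ_self _) (le_max_left _ _)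
  have hmul := hp.emultiplicity_choose' (n := s) (k := k) (b := b) hlog
  apply pow_dvd_of_le_emultiplicity
  rw [hmul]
  have hsub : Finset.Ico 1 (lam + 1) ⊆
      {i ∈ Finset.Ico 1 b | p ^ i ≤ k % p ^ i + s % p ^ i} := by
    intro t ht
    simp only [Finset.mem_Ico] at ht
    simp only [Finset.mem_filter, Finset.mem_Ico]
    exact ⟨⟨ht.1, lt_of_lt_of_le ht.2 (le_max_right _ _)⟩, h t ht.1 (by omega)⟩
  calc (lam : ℕ∞) = ((Finset.Ico 1 (lam + 1)).card : ℕ∞) := by simp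
    _ ≤ _ := by exact_mod_cast Finset.card_le_card hsub

/-- `Ring.choose` for a negative integer upper index. -/
lemma ringChoose_of_neg (r : ℤ) (k : ℕ) (h : r - k + 1 < 0) :
    Ring.choose r k = (-1) ^ k * Nat.choose ((k : ℤ) - r - 1).toNat k := by
  rw [Ring.choose]
  have h1 : r - (k : ℤ) + 1 = Int.negSucc (((k : ℤ) - r - 2).toNat) := by
    rw [Int.negSucc_eq, Int.toNat_of_nonneg (by omega)]; ring
  rw [h1]
  have h2 : Ring.multichoose (Int.negSucc (((k : ℤ) - r - 2).toNat)) k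
      = Int.multichoose (Int.negSucc (((k : ℤ) - r - 2).toNat)) k := rfl
  rw [h2, Int.multichoose]
  have h3 : ((k : ℤ) - r - 2).toNat + 1 = ((k : ℤ) - r - 1).toNat := by omega
  rw [h3, Int.coe_negOnePow_natCast]

/-- Lemma 3.3 of Straub: for a prime `p`, an integer `a`, `i ∈ {0, ..., p-1}` and an
integer `j` with `0 < j < p - i`, the binomial coefficient `C(p·a + i, p^λ·m - j)`
(with possibly negative upper index) is divisible by `p^λ` for all positive `m, λ`. -/
theorem binom_padic_lemma (p : ℕ) (hp : p.Prime) (a : ℤ) (i j : ℕ)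
    (hi : i ≤ p - 1) (hj0 : 0 < j) (hj : j < p - i) (m lam : ℕ)
    (hm : 0 < m) (hlam : 0 < lam) :
    (p : ℤ) ^ lam ∣ Ring.choose ((p : ℤ) * a + (i : ℤ)) (p ^ lam * m - j) := by
  have hp2 := hp.two_le
  have hip : i < p := by omega
  set k : ℕ := p ^ lam * m - j with hk
  have hpk : p ≤ p ^ lam * m := by
    calc p = p ^ 1 * 1 := by ring
    _ ≤ p ^ lam * m := Nat.mul_le_mul (Nat.pow_le_pow_right (by omega) hlam) hm
  have hjp : j < p := by omega
  have hkj : k + j = p ^ lam * m := by omega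
  have hk1 : 1 ≤ k := by omega
  -- digit facts for k : the base-p digits of k at positions 0..lam-1 are p-j, p-1, ..., p-1
  have hkmod : ∀ t, 1 ≤ t → t ≤ lam → k % p ^ t = p ^ t - j := by
    intro t ht htl
    have hdvd : p ^ t ∣ p ^ lam * m := Dvd.dvd.mul_right (pow_dvd_pow p htl) m
    obtain ⟨c, hc⟩ := hdvd
    have hpt : p ≤ p ^ t := le_self_pow₀ (by omega) (by omega)
    have hc1 : 1 ≤ c := by
      rcases Nat.eq_zero_or_pos c with h0 | h
      · rw [h0, mul_zero] at hc; omega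
      · exact h
    obtain ⟨c', rfl⟩ : ∃ c', c = c' + 1 := ⟨c - 1, by omega⟩
    rw [Nat.mul_add, Nat.mul_one] at hc
    have hkform : k = (p ^ t - j) + p ^ t * c' := by omega
    rw [hkform, Nat.add_mul_mod_self_left, Nat.mod_eq_of_lt (by omega)]
  rcases le_or_gt 0 a with ha | ha
  · -- nonnegative upper index
    set n : ℕ := p * a.toNat + i with hn
    have hcast : (p : ℤ) * a + (i : ℤ) = (n : ℕ) := by
      have : ((p * a.toNat + i : ℕ) : ℤ) = (p : ℤ) * a + (i : ℤ) := by
        push_cast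
        rw [Int.toNat_of_nonneg ha]
      rw [← this, hn]
    rw [hcast, Ring.choose_natCast]
    rcases lt_or_ge n k with hnk | hkn
    · rw [Nat.choose_eq_zero_of_lt hnk]; simp
    · set s : ℕ := n - k with hs
      have hsk : s + k = n := by omega
      have hnp : n % p = i := by
        rw [hn, Nat.mul_add_mod]
        exact Nat.mod_eq_of_lt hip
      have hkp : k % p = p - j := by
        have := hkmod 1 le_rfl hlam
        simpa using this
      have hsp : s % p = i + j := by
        have hadd : (s % p + k % p) % p = n % p := by
          rw [← Nat.add_mod, hsk]
        rw [hnp, hkp] at hadd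
        have hsb : s % p < p := Nat.mod_lt _ (by omega)
        set x := s % p
        rcases lt_or_ge (x + (p - j)) p with hlt | hge
        · rw [Nat.mod_eq_of_lt hlt] at hadd; omega
        · have : (x + (p - j)) % p = x + (p - j) - p := by
            rw [Nat.mod_eq_sub_mod hge, Nat.mod_eq_of_lt (by omega)]
          rw [this] at hadd; omega
      have hcarry : ∀ t, 1 ≤ t → t ≤ lam → p ^ t ≤ k % p ^ t + s % p ^ t := by
        intro t ht htl
        have h1 := hkmod t ht htl
        have h3 : s % p ^ t % p = s % p :=
          Nat.mod_mod_of_dvd s (dvd_pow_self p (by omega))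
        have h4 : s % p ^ t % p ≤ s % p ^ t := Nat.mod_le _ _
        have hpt : p ≤ p ^ t := le_self_pow₀ (by omega) (by omega)
        omega
      have := key_nat_dvd_choose p hp s k lam hcarry
      rw [hsk] at this
      exact_mod_cast Int.natCast_dvd_natCast.mpr this
  · -- negative upper index
    set r : ℤ := (p : ℤ) * a + (i : ℤ) with hr
    have hrneg : r ≤ -(p : ℤ) + i := by
      have h1 : a ≤ -1 := by omega
      have h2 := mul_le_mul_of_nonneg_left h1 (by positivity : (0:ℤ) ≤ (p:ℤ))
      simp only [mul_neg, mul_one] at h2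
      omega
    have hkZ : (1:ℤ) ≤ (k:ℤ) := by exact_mod_cast hk1
    have hrn : r - k + 1 < 0 := by omega
    rw [ringChoose_of_neg r k hrn]
    have hs0 : (0:ℤ) ≤ -r - 1 := by omega
    set s : ℕ := (-r - 1).toNat with hsdef
    have hscast : (s : ℤ) = -r - 1 := Int.toNat_of_nonneg hs0
    have hskcast : ((s + k : ℕ) : ℤ) = (k : ℤ) - r - 1 := by push_cast [hscast]; ring
    have hN : ((k : ℤ) - r - 1).toNat = s + k := by omega
    rw [hN]
    set c : ℕ := (-a - 1).toNat with hcdef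
    have hccast : (c : ℤ) = -a - 1 := Int.toNat_of_nonneg (by omega)
    have hsnat : s = p * c + (p - 1 - i) := by
      have h1 : (s : ℤ) = (p : ℤ) * (c : ℤ) + ((p : ℤ) - 1 - (i : ℤ)) := by
        rw [hscast, hccast, hr]; ring
      have h2 : ((p * c : ℕ) : ℤ) = (p : ℤ) * (c : ℤ) := by push_cast; ring
      omega
    have hsp : s % p = p - 1 - i := by
      rw [hsnat, Nat.mul_add_mod]
      exact Nat.mod_eq_of_lt (by omega)
    have hcarry : ∀ t, 1 ≤ t → t ≤ lam → p ^ t ≤ k % p ^ t + s % p ^ t := by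
      intro t ht htl
      have h1 := hkmod t ht htl
      have h3 : s % p ^ t % p = s % p :=
        Nat.mod_mod_of_dvd s (dvd_pow_self p (by omega))
      have h4 : s % p ^ t % p ≤ s % p ^ t := Nat.mod_le _ _
      have hpt : p ≤ p ^ t := le_self_pow₀ (by omega) (by omega)
      omega
    have hdvd := key_nat_dvd_choose p hp s k lam hcarry
    have hdvdZ : (p : ℤ) ^ lam ∣ ((s + k).choose k : ℤ) := by
      exact_mod_cast Int.natCast_dvd_natCast.mpr hdvd
    exact Dvd.dvd.mul_left hdvdZ _
end

section
/- Let p be a prime. For any integers n and k with k > 0 and p not dividing k, the binomial coefficient C(p^λ·n, k) is congruent to 0 modulo p^λ for every positive integer λ. -/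
lemma ring_choose_succ_mul (r : ℤ) (j : ℕ) :
    (j + 1 : ℤ) * Ring.choose r (j + 1) = r * Ring.choose (r - 1) j := by
  have h1 := Ring.descPochhammer_eq_factorial_smul_choose (R := ℤ) r (j + 1)
  have h2 := Ring.descPochhammer_eq_factorial_smul_choose (R := ℤ) (r - 1) j
  rw [← Polynomial.eval_eq_smeval] at h1 h2
  rw [descPochhammer_succ_left, Polynomial.eval_mul, Polynomial.eval_X,
    Polynomial.eval_comp, Polynomial.eval_sub, Polynomial.eval_X, Polynomial.eval_one, h2] at h1
  have hfac : ((j + 1).factorial : ℤ) = (j + 1) * j.factorial := by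
    push_cast [Nat.factorial_succ]; ring
  have hj : (j.factorial : ℤ) ≠ 0 := by positivity
  apply mul_left_cancel₀ hj
  simp only [nsmul_eq_mul] at h1
  rw [hfac] at h1; linear_combination -h1

/-- For a prime `p`, integers `n` and `k` with `k > 0` and `p ∤ k`, the binomial
coefficient `C(p^λ·n, k)` (with possibly negative upper index) is divisible by
`p^λ` for every positive integer `λ`. -/
theorem binom_pow_mul_dvd (p : ℕ) (hp : p.Prime) (n : ℤ) (k : ℕ) (hk0 : 0 < k)
    (hk : ¬ p ∣ k) (lam : ℕ) (hlam : 0 < lam) :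
    (p : ℤ) ^ lam ∣ Ring.choose ((p : ℤ) ^ lam * n) k := by
  obtain ⟨j, rfl⟩ := Nat.exists_eq_succ_of_ne_zero hk0.ne'
  have key := ring_choose_succ_mul ((p : ℤ) ^ lam * n) j
  have hdvd : (p : ℤ) ^ lam ∣ (j + 1 : ℤ) * Ring.choose ((p : ℤ) ^ lam * n) (j + 1) := by
    rw [key]
    exact Dvd.dvd.mul_right (dvd_mul_right _ _) _
  have hcop : IsCoprime ((p : ℤ) ^ lam) ((j + 1 : ℕ) : ℤ) := by
    apply IsCoprime.pow_left
    rw [Int.isCoprime_iff_gcd_eq_one, Int.gcd_natCast_natCast]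
    exact (Nat.Prime.coprime_iff_not_dvd hp).mpr hk
  exact hcop.dvd_of_dvd_mul_left (by push_cast at hdvd ⊢; exact hdvd)
end
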